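/- Let κ_{‖·‖}(u) = ‖(u↓ᵢ/u↓_{n−i+1})_{i=1}^{⌊n/2⌋}‖₂ on vectors u ∈ ℝⁿ with positive entries. Then κ_{‖·‖} is strictly Schur-convex on the positive orthant: if u, v have positive entries, u ≺ v, and u↓ ≠ v↓, then κ_{‖·‖}(u) < κ_{‖·‖}(v). -/

import Mathlib

open Finset

/-- Decreasing rearrangement of a vector in ℝⁿ. -/
noncomputable def dsort {n : ℕ} (u : Fin n → ℝ) : Fin n → ℝ :=
  u ∘ Tuple.sort (fun i => -u i)

/-- `Maj u v` : `u` is majorized by `v`. -/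
def Maj {n : ℕ} (u v : Fin n → ℝ) : Prop :=
  (∀ k : ℕ, ∑ i ∈ univ.filter (fun i : Fin n => (i : ℕ) < k), dsort u i ≤
      ∑ i ∈ univ.filter (fun i : Fin n => (i : ℕ) < k), dsort v i) ∧
  ∑ i, u i = ∑ i, v i

/-- The condition vector of `u`: ratios of the `i`-th and `(n-i+1)`-th largest entries. -/
noncomputable def condVec {n : ℕ} (u : Fin n → ℝ) (i : Fin (n / 2)) : ℝ :=
  dsort u ⟨i, i.2.trans_le (Nat.div_le_self n 2)⟩ /
    dsort u ⟨n - 1 - i, by have := i.2; omega⟩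

/-- Euclidean norm of the condition vector. -/
noncomputable def condNorm {n : ℕ} (u : Fin n → ℝ) : ℝ :=
  Real.sqrt (∑ i, condVec u i ^ 2)

namespace Stmt8Aux

/-- Prefix sums. -/
noncomputable def pS {n : ℕ} (x : Fin n → ℝ) (k : ℕ) : ℝ :=
  ∑ i ∈ univ.filter (fun i : Fin n => (i : ℕ) < k), x i

/-- index of numerator -/
def lo {n : ℕ} (i : Fin (n / 2)) : Fin n := ⟨i, i.2.trans_le (Nat.div_le_self n 2)⟩

/-- index of denominator -/
def hi {n : ℕ} (i : Fin (n / 2)) : Fin n := ⟨n - 1 - i, by have := i.2; omega⟩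

/-- single term -/
noncomputable def t {n : ℕ} (x : Fin n → ℝ) (i : Fin (n / 2)) : ℝ :=
  (x (lo i) / x (hi i)) ^ 2

/-- sum of squares of condition vector, for sorted input -/
noncomputable def g {n : ℕ} (x : Fin n → ℝ) : ℝ := ∑ i, t x i

lemma lo_lt_half {n : ℕ} (i : Fin (n / 2)) : ((lo i : Fin n) : ℕ) < n / 2 := i.2

lemma hi_ge_half {n : ℕ} (i : Fin (n / 2)) : n / 2 ≤ ((hi i : Fin n) : ℕ) := by
  have := i.2; simp only [hi]; omega

lemma pS_succ {n : ℕ} (x : Fin n → ℝ) (k : ℕ) (hk : k < n) :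
    pS x (k + 1) = pS x k + x ⟨k, hk⟩ := by
  classical
  have hset : univ.filter (fun i : Fin n => (i : ℕ) < k + 1) =
      insert ⟨k, hk⟩ (univ.filter (fun i : Fin n => (i : ℕ) < k)) := by
    ext i
    simp only [mem_filter, mem_univ, true_and, mem_insert, Fin.ext_iff]
    omega
  have hnotmem : (⟨k, hk⟩ : Fin n) ∉ univ.filter (fun i : Fin n => (i : ℕ) < k) := by
    simp
  rw [pS, pS, hset, Finset.sum_insert hnotmem]
  ring

lemma pS_all {n : ℕ} (x : Fin n → ℝ) : pS x n = ∑ i, x i := by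
  rw [pS, Finset.filter_true_of_mem]
  intro i _
  exact i.2

lemma psi_anti {x y δ : ℝ} (hx : 0 < x) (hδ : 0 < δ) (hxy : x < y) :
    1/y^2 - 1/(y+δ)^2 < 1/x^2 - 1/(x+δ)^2 := by
  have hy : 0 < y := hx.trans hxy
  have key : (y+x+2*δ)*x^2*y^2 < (y+x)*(x+δ)^2*(y+δ)^2 := by
    have expand : (y+x)*(x+δ)^2*(y+δ)^2 - (y+x+2*δ)*x^2*y^2 =
        2*δ*(x*y)*(x^2+x*y+y^2) + 2*(x*y)*δ^2*(x+y) + δ^2*(x+y)^3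
          + 2*δ^3*(x+y)^2 + δ^4*(x+y) := by ring
    nlinarith [mul_pos hx hy, mul_pos (mul_pos hx hy) hδ, mul_pos hδ hδ,
      mul_pos (mul_pos hx hy) (mul_pos hδ hδ),
      mul_pos (mul_pos hδ hδ) (mul_pos (add_pos hx hy) (mul_pos (add_pos hx hy) (add_pos hx hy))),
      mul_pos (mul_pos (mul_pos hδ hδ) hδ) (mul_pos (add_pos hx hy) (add_pos hx hy)),
      mul_pos (mul_pos (mul_pos hδ hδ) (mul_pos hδ hδ)) (add_pos hx hy),
      mul_pos (mul_pos hδ (mul_pos hx hy)) (add_pos (add_pos (mul_pos hx hx) (mul_pos hx hy)) (mul_pos hy hy))]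
  -- now convert to the fraction inequality
  have e1 : 1/y^2 - 1/(y+δ)^2 = (y-x) * ((y+x+2*δ)*x^2*y^2) / (x^2*y^2*(x+δ)^2*(y+δ)^2) + ((1/x^2 - 1/(x+δ)^2) - (y-x)*((y+x)*(x+δ)^2*(y+δ)^2)/(x^2*y^2*(x+δ)^2*(y+δ)^2)) := by
    field_simp
    ring
  rw [e1]
  have hpos : (0:ℝ) < x^2*y^2*(x+δ)^2*(y+δ)^2 := by positivity
  have h2 : (y-x) * ((y+x+2*δ)*x^2*y^2) / (x^2*y^2*(x+δ)^2*(y+δ)^2) <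
      (y-x) * ((y+x)*(x+δ)^2*(y+δ)^2) / (x^2*y^2*(x+δ)^2*(y+δ)^2) := by
    apply (div_lt_div_iff_of_pos_right hpos).mpr
    apply mul_lt_mul_of_pos_left key (by linarith)
  linarith

lemma numA {B C β κ δ : ℝ} (hB : 0 < B) (hBC : B ≤ C) (hκ : 0 < κ) (hδ : 0 < δ)
    (hgap : κ + δ ≤ β - δ) :
    ((β - δ)/B)^2 + ((κ+δ)/C)^2 < (β/B)^2 + (κ/C)^2 := by
  have hC : 0 < C := lt_of_lt_of_le hB hBC
  have key : δ*(2*κ+δ)*B^2 < δ*(2*β-δ)*C^2 := by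
    have h1 : δ*(2*κ+δ) < δ*(2*β-δ) := by nlinarith
    have h2 : δ*(2*κ+δ)*B^2 ≤ δ*(2*κ+δ)*C^2 := by
      apply mul_le_mul_of_nonneg_left _ (by positivity : (0:ℝ) ≤ δ*(2*κ+δ))
      nlinarith
    have h3 : δ*(2*κ+δ)*C^2 < δ*(2*β-δ)*C^2 :=
      mul_lt_mul_of_pos_right h1 (by positivity)
    linarith
  have e1 : ((β - δ)/B)^2 + ((κ+δ)/C)^2 =
      ((β-δ)^2*C^2 + (κ+δ)^2*B^2)/(B^2*C^2) := by field_simp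
  have e2 : (β/B)^2 + (κ/C)^2 = (β^2*C^2 + κ^2*B^2)/(B^2*C^2) := by field_simp
  rw [e1, e2]
  apply (div_lt_div_iff_of_pos_right (by positivity)).mpr
  nlinarith [key]

lemma numB {β κ δ : ℝ} (hκ : 0 < κ) (hδ : 0 < δ) (hgap : κ + δ ≤ β - δ) :
    ((β - δ)/(κ+δ))^2 < (β/κ)^2 := by
  have hβδ : 0 < β - δ := by linarith
  rw [div_pow, div_pow, div_lt_div_iff₀ (by positivity) (by positivity)]
  have h1 : (β-δ)*κ < β*(κ+δ) := by nlinarith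
  nlinarith [pow_lt_pow_left₀ h1 (by positivity : (0:ℝ) ≤ (β-δ)*κ) (two_ne_zero)]

lemma numC {B β δ : ℝ} (hB : 0 < B) (hδ : 0 < δ) (hβ : 0 < β - δ) :
    ((β - δ)/B)^2 < (β/B)^2 := by
  rw [div_pow, div_pow, div_lt_div_iff₀ (by positivity) (by positivity)]
  nlinarith [mul_pos (mul_pos hδ (by linarith : (0:ℝ) < 2*β - δ)) (mul_pos hB hB)]

lemma numD {P κ δ : ℝ} (hP : 0 < P) (hκ : 0 < κ) (hδ : 0 < δ) :
    (P/(κ+δ))^2 < (P/κ)^2 := by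
  rw [div_pow, div_pow, div_lt_div_iff₀ (by positivity) (by positivity)]
  nlinarith [mul_pos (mul_pos hP hP) (mul_pos hκ hδ), mul_pos (mul_pos hP hP) (mul_pos hδ hδ)]

lemma numE {P Q β κ δ : ℝ} (hP : 0 < P) (hPQ : P ≤ Q) (hκ : 0 < κ) (hδ : 0 < δ)
    (hgap : κ + δ ≤ β - δ) :
    (P/(β-δ))^2 + (Q/(κ+δ))^2 < (P/β)^2 + (Q/κ)^2 := by
  have hβδ : 0 < β - δ := lt_of_lt_of_le (by linarith) hgap
  have hβ : 0 < β := by linarith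
  have hQ : 0 < Q := lt_of_lt_of_le hP hPQ
  have hψ := psi_anti hκ hδ (show κ < β - δ by linarith)
  rw [show β - δ + δ = β by ring] at hψ
  have hA : (0:ℝ) ≤ 1/(β-δ)^2 - 1/β^2 := by
    have h1 : 1/β^2 ≤ 1/(β-δ)^2 := by
      apply one_div_le_one_div_of_le (by positivity)
      nlinarith
    linarith
  have h1 : P^2*(1/(β-δ)^2 - 1/β^2) ≤ Q^2*(1/(β-δ)^2 - 1/β^2) := by
    apply mul_le_mul_of_nonneg_right _ hA
    exact pow_le_pow_left₀ hP.le hPQ 2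
  have h2 : Q^2*(1/(β-δ)^2 - 1/β^2) < Q^2*(1/κ^2 - 1/(κ+δ)^2) :=
    mul_lt_mul_of_pos_left hψ (by positivity)
  have h3 : P^2*(1/(β-δ)^2 - 1/β^2) < Q^2*(1/κ^2 - 1/(κ+δ)^2) := lt_of_le_of_lt h1 h2
  have e1 : (P/(β-δ))^2 = P^2*(1/(β-δ)^2) := by rw [div_pow]; ring
  have e2 : (P/β)^2 = P^2*(1/β^2) := by rw [div_pow]; ring
  have e3 : (Q/(κ+δ))^2 = Q^2*(1/(κ+δ)^2) := by rw [div_pow]; ring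
  have e4 : (Q/κ)^2 = Q^2*(1/κ^2) := by rw [div_pow]; ring
  rw [e1, e2, e3, e4]
  nlinarith [h3]

/-- the transfer lemma: a Robin Hood transfer strictly decreases `g`. -/
lemma transfer {n : ℕ} (b : Fin n → ℝ) (hbpos : ∀ i, 0 < b i) (hb : Antitone b)
    (j k : Fin n) (hjk : j < k) (δ : ℝ) (hδ : 0 < δ)
    (hgap : b k + δ ≤ b j - δ) :
    g (fun i => b i + (if i = j then -δ else 0) + (if i = k then δ else 0)) < g b := by
  classical
  have hne_jk : j ≠ k := ne_of_lt hjk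
  have hjkv : (j : ℕ) < (k : ℕ) := hjk
  have hjn : (j : ℕ) < n := j.2
  have hkn : (k : ℕ) < n := k.2
  set b' : Fin n → ℝ :=
    fun i => b i + (if i = j then -δ else 0) + (if i = k then δ else 0) with hb'def
  have hb'j : b' j = b j - δ := by simp [hb'def, hne_jk, sub_eq_add_neg]
  have hb'k : b' k = b k + δ := by simp [hb'def, Ne.symm hne_jk, sub_eq_add_neg]
  have hb'o : ∀ i, i ≠ j → i ≠ k → b' i = b i := by
    intro i h1 h2; simp [hb'def, h1, h2]
  have hbj : 0 < b j := hbpos j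
  have hbk : 0 < b k := hbpos k
  have hβδ : 0 < b j - δ := by linarith
  -- congruence of unaffected terms
  have tcong : ∀ i : Fin (n/2), (i : ℕ) ≠ (j : ℕ) → (i : ℕ) ≠ (k : ℕ) →
      n - 1 - (i : ℕ) ≠ (j : ℕ) → n - 1 - (i : ℕ) ≠ (k : ℕ) → t b' i = t b i := by
    intro i h1 h2 h3 h4
    unfold t
    rw [hb'o (lo i) (fun h => h1 (congrArg Fin.val h)) (fun h => h2 (congrArg Fin.val h)),
      hb'o (hi i) (fun h => h3 (congrArg Fin.val h)) (fun h => h4 (congrArg Fin.val h))]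
  have reduce : ∀ S : Finset (Fin (n/2)), (∀ i : Fin (n/2), i ∉ S → t b' i = t b i) →
      g b' - g b = ∑ i ∈ S, (t b' i - t b i) := by
    intro S hS
    unfold g
    rw [← Finset.sum_sub_distrib]
    symm
    apply Finset.sum_subset (Finset.subset_univ S)
    intro i _ hiS
    rw [hS i hiS]
    ring
  by_cases hj2 : (j : ℕ) < n / 2
  · by_cases hk2 : (k : ℕ) < n / 2
    · -- Case A : both numerators
      set iJ : Fin (n/2) := ⟨(j : ℕ), hj2⟩ with hiJdef
      set iK : Fin (n/2) := ⟨(k : ℕ), hk2⟩ with hiKdef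
      have hne2 : iJ ≠ iK := by
        intro h
        have hv := congrArg Fin.val h
        exact Nat.ne_of_lt hjkv hv
      have hred := reduce {iJ, iK} ?_
      · have hloJ : lo iJ = j := Fin.ext rfl
        have hloK : lo iK = k := Fin.ext rfl
        have hhiJj : hi iJ ≠ j := fun h => by have := congrArg Fin.val h; simp [hi] at this; omega
        have hhiJk : hi iJ ≠ k := fun h => by have := congrArg Fin.val h; simp [hi] at this; omega
        have hhiKj : hi iK ≠ j := fun h => by have := congrArg Fin.val h; simp [hi] at this; omega
        have hhiKk : hi iK ≠ k := fun h => by have := congrArg Fin.val h; simp [hi] at this; omega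
        have htJ : t b' iJ - t b iJ =
            ((b j - δ)/b (hi iJ))^2 - (b j/b (hi iJ))^2 := by
          unfold t; rw [hloJ, hb'j, hb'o _ hhiJj hhiJk]
        have htK : t b' iK - t b iK =
            ((b k + δ)/b (hi iK))^2 - (b k/b (hi iK))^2 := by
          unfold t; rw [hloK, hb'k, hb'o _ hhiKj hhiKk]
        have hBC : b (hi iJ) ≤ b (hi iK) := by
          apply hb
          rw [Fin.le_def]
          show n - 1 - (k : ℕ) ≤ n - 1 - (j : ℕ)
          omega
        rw [Finset.sum_pair hne2, htJ, htK] at hred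
        have := numA (hbpos (hi iJ)) hBC hbk hδ hgap
        linarith
      · intro i hiS
        simp only [Finset.mem_insert, Finset.mem_singleton, not_or] at hiS
        have hi2 := i.2
        apply tcong i
        · exact fun h => hiS.1 (Fin.ext h)
        · exact fun h => hiS.2 (Fin.ext h)
        · omega
        · omega
    · by_cases hkj : (k : ℕ) = n - 1 - (j : ℕ)
      · -- Case B : single pair (j, k)
        set iJ : Fin (n/2) := ⟨(j : ℕ), hj2⟩ with hiJdef
        have hred := reduce {iJ} ?_
        · have hloJ : lo iJ = j := Fin.ext rfl
          have hhiJ : hi iJ = k := Fin.ext (by show n - 1 - (j : ℕ) = (k : ℕ); omega)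
          have htJ : t b' iJ - t b iJ =
              ((b j - δ)/(b k + δ))^2 - (b j/b k)^2 := by
            unfold t; rw [hloJ, hhiJ, hb'j, hb'k]
          rw [Finset.sum_singleton, htJ] at hred
          have := numB hbk hδ hgap
          linarith
        · intro i hiS
          simp only [Finset.mem_singleton] at hiS
          have hi2 := i.2
          apply tcong i
          · exact fun h => hiS (Fin.ext h)
          · omega
          · omega
          · intro h
            exact hiS (Fin.ext (show (i : ℕ) = (j : ℕ) by omega))
      · by_cases hk3 : n - 1 - (k : ℕ) < n / 2
        · -- Case C1 : numerator j and denominator k, separate pairs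
          set iJ : Fin (n/2) := ⟨(j : ℕ), hj2⟩ with hiJdef
          set iK : Fin (n/2) := ⟨n - 1 - (k : ℕ), hk3⟩ with hiKdef
          have hne2 : iJ ≠ iK := fun h => by
            have := congrArg Fin.val h
            simp only [hiJdef, hiKdef] at this
            omega
          have hred := reduce {iJ, iK} ?_
          · have hloJ : lo iJ = j := Fin.ext rfl
            have hhiJj : hi iJ ≠ j := fun h => by
              have := congrArg Fin.val h; simp [hi] at this; omega
            have hhiJk : hi iJ ≠ k := fun h => by
              have := congrArg Fin.val h; simp [hi] at this
              have hv : ((hi iJ : Fin n) : ℕ) = n - 1 - (j : ℕ) := rfl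
              omega
            have hloKj : lo iK ≠ j := fun h => by
              have := congrArg Fin.val h; simp [lo] at this
              have hv : ((lo iK : Fin n) : ℕ) = n - 1 - (k : ℕ) := rfl
              omega
            have hloKk : lo iK ≠ k := fun h => by
              have := congrArg Fin.val h; simp [lo] at this; omega
            have hhiK : hi iK = k := Fin.ext (by show n - 1 - (n - 1 - (k : ℕ)) = (k : ℕ); omega)
            have htJ : t b' iJ - t b iJ =
                ((b j - δ)/b (hi iJ))^2 - (b j/b (hi iJ))^2 := by
              unfold t; rw [hloJ, hb'j, hb'o _ hhiJj hhiJk]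
            have htK : t b' iK - t b iK =
                (b (lo iK)/(b k + δ))^2 - (b (lo iK)/b k)^2 := by
              unfold t; rw [hhiK, hb'k, hb'o _ hloKj hloKk]
            rw [Finset.sum_pair hne2, htJ, htK] at hred
            have h1 := numC (hbpos (hi iJ)) hδ hβδ
            have h2 := numD (hbpos (lo iK)) hbk hδ
            linarith
          · intro i hiS
            simp only [Finset.mem_insert, Finset.mem_singleton, not_or] at hiS
            have hi2 := i.2
            apply tcong i
            · exact fun h => hiS.1 (Fin.ext h)
            · omega
            · omega
            · intro h
              exact hiS.2 (Fin.ext (show (i : ℕ) = n - 1 - (k : ℕ) by omega))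
        · -- Case C2 : only numerator j affected
          set iJ : Fin (n/2) := ⟨(j : ℕ), hj2⟩ with hiJdef
          have hred := reduce {iJ} ?_
          · have hloJ : lo iJ = j := Fin.ext rfl
            have hhiJj : hi iJ ≠ j := fun h => by
              have := congrArg Fin.val h; simp [hi] at this; omega
            have hhiJk : hi iJ ≠ k := fun h => by
              have := congrArg Fin.val h; simp [hi] at this; omega
            have htJ : t b' iJ - t b iJ =
                ((b j - δ)/b (hi iJ))^2 - (b j/b (hi iJ))^2 := by
              unfold t; rw [hloJ, hb'j, hb'o _ hhiJj hhiJk]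
            rw [Finset.sum_singleton, htJ] at hred
            have := numC (hbpos (hi iJ)) hδ hβδ
            linarith
          · intro i hiS
            simp only [Finset.mem_singleton] at hiS
            have hi2 := i.2
            apply tcong i
            · exact fun h => hiS (Fin.ext h)
            · omega
            · omega
            · omega
  · -- j is not a numerator index; hence k is in the second half
    have hk2 : ¬ (k : ℕ) < n / 2 := by omega
    have hk3 : n - 1 - (k : ℕ) < n / 2 := by omega
    set iK : Fin (n/2) := ⟨n - 1 - (k : ℕ), hk3⟩ with hiKdef
    have hloKj : lo iK ≠ j := fun h => by
      have := congrArg Fin.val h; simp [lo] at this; omega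
    have hloKk : lo iK ≠ k := fun h => by
      have := congrArg Fin.val h; simp [lo] at this; omega
    have hhiK : hi iK = k := Fin.ext (by show n - 1 - (n - 1 - (k : ℕ)) = (k : ℕ); omega)
    have htK : t b' iK - t b iK =
        (b (lo iK)/(b k + δ))^2 - (b (lo iK)/b k)^2 := by
      unfold t; rw [hhiK, hb'k, hb'o _ hloKj hloKk]
    by_cases hj3 : n - 1 - (j : ℕ) < n / 2
    · -- Case D2 : both are denominators
      set iJ : Fin (n/2) := ⟨n - 1 - (j : ℕ), hj3⟩ with hiJdef
      have hne2 : iJ ≠ iK := fun h => by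
        have := congrArg Fin.val h
        simp only [hiJdef, hiKdef] at this
        omega
      have hred := reduce {iJ, iK} ?_
      · have hloJj : lo iJ ≠ j := fun h => by
          have := congrArg Fin.val h; simp [lo] at this; omega
        have hloJk : lo iJ ≠ k := fun h => by
          have := congrArg Fin.val h; simp [lo] at this; omega
        have hhiJ : hi iJ = j := Fin.ext (by show n - 1 - (n - 1 - (j : ℕ)) = (j : ℕ); omega)
        have htJ : t b' iJ - t b iJ =
            (b (lo iJ)/(b j - δ))^2 - (b (lo iJ)/b j)^2 := by
          unfold t; rw [hhiJ, hb'j, hb'o _ hloJj hloJk]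
        have hPQ : b (lo iJ) ≤ b (lo iK) := by
          apply hb
          rw [Fin.le_def]
          show n - 1 - (k : ℕ) ≤ n - 1 - (j : ℕ)
          omega
        rw [Finset.sum_pair hne2, htJ, htK] at hred
        have := numE (hbpos (lo iJ)) hPQ hbk hδ hgap
        linarith
      · intro i hiS
        simp only [Finset.mem_insert, Finset.mem_singleton, not_or] at hiS
        have hi2 := i.2
        apply tcong i
        · omega
        · omega
        · intro h
          exact hiS.1 (Fin.ext (show (i : ℕ) = n - 1 - (j : ℕ) by omega))
        · intro h
          exact hiS.2 (Fin.ext (show (i : ℕ) = n - 1 - (k : ℕ) by omega))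
    · -- Case D1 : j is the middle index
      have hred := reduce {iK} ?_
      · rw [Finset.sum_singleton, htK] at hred
        have := numD (hbpos (lo iK)) hbk hδ
        linarith
      · intro i hiS
        simp only [Finset.mem_singleton] at hiS
        have hi2 := i.2
        apply tcong i
        · omega
        · omega
        · omega
        · intro h
          exact hiS (Fin.ext (show (i : ℕ) = n - 1 - (k : ℕ) by omega))

/-- main lemma for sorted vectors, by induction on the number of differences. -/
lemma sorted_main {n : ℕ} (a b : Fin n → ℝ)
    (hapos : ∀ i, 0 < a i) (hbpos : ∀ i, 0 < b i)
    (ha : Antitone a) (hb : Antitone b)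
    (hpre : ∀ k, pS a k ≤ pS b k) (hsum : pS a n = pS b n)
    (hne : a ≠ b) : g a < g b := by
  classical
  suffices H : ∀ N : ℕ, ∀ b : Fin n → ℝ, (∀ i, 0 < b i) → Antitone b →
      (∀ k, pS a k ≤ pS b k) → pS a n = pS b n → a ≠ b →
      (univ.filter (fun i => a i ≠ b i)).card ≤ N → g a < g b by
    exact H _ b hbpos hb hpre hsum hne le_rfl
  intro N
  induction N with
  | zero =>
    intro b hbpos hb hpre hsum hne hcard
    exfalso
    apply hne
    funext i
    by_contra hne2
    have hmem : i ∈ univ.filter (fun i => a i ≠ b i) := by simp [hne2]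
    have := Finset.card_pos.mpr ⟨i, hmem⟩
    omega
  | succ N ih =>
    intro b hbpos hb hpre hsum hne hcard
    -- existence of an index where b < a
    have hKne : (univ.filter (fun i => b i < a i)).Nonempty := by
      by_contra hK
      apply hne
      have hle : ∀ i, a i ≤ b i := by
        intro i
        by_contra hlt
        push_neg at hlt
        exact hK ⟨i, by simp [hlt]⟩
      have hsum2 : ∑ i, a i = ∑ i, b i := by
        rw [← pS_all, ← pS_all]; exact hsum
      funext i
      exact (Finset.sum_eq_sum_iff_of_le (fun i _ => hle i)).mp hsum2 i (mem_univ i)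
    set kF := (univ.filter (fun i => b i < a i)).min' hKne with hkFdef
    have hkmem : b kF < a kF := by
      have h := (univ.filter (fun i => b i < a i)).min'_mem hKne
      rw [Finset.mem_filter] at h
      exact h.2
    have hkmin : ∀ i : Fin n, b i < a i → kF ≤ i := by
      intro i hi
      exact Finset.min'_le _ _ (by simp [hi])
    -- existence of j < kF with a j < b j
    have hJne : (univ.filter (fun i => i < kF ∧ a i < b i)).Nonempty := by
      by_contra hJ
      have heqlt : ∀ i : Fin n, i < kF → a i = b i := by
        intro i hik
        have h1 : ¬ b i < a i := fun h => absurd (hkmin i h) (not_le.mpr hik)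
        have h2 : ¬ a i < b i := fun h => hJ ⟨i, by simp [hik, h]⟩
        linarith [le_of_not_gt h1, le_of_not_gt h2]
      have hps : pS a (kF : ℕ) = pS b (kF : ℕ) := by
        unfold pS
        apply Finset.sum_congr rfl
        intro i hi
        simp only [mem_filter, mem_univ, true_and] at hi
        exact heqlt i (by exact hi)
      have h3 := hpre ((kF : ℕ) + 1)
      rw [pS_succ a _ kF.2, pS_succ b _ kF.2] at h3
      simp only [Fin.eta] at h3
      linarith
    set jF := (univ.filter (fun i => i < kF ∧ a i < b i)).max' hJne with hjFdef
    have hjmem : jF < kF ∧ a jF < b jF := by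
      have h := (univ.filter (fun i => i < kF ∧ a i < b i)).max'_mem hJne
      rw [Finset.mem_filter] at h
      exact h.2
    have hjmax : ∀ i : Fin n, i < kF → a i < b i → i ≤ jF := by
      intro i h1 h2
      exact Finset.le_max' _ _ (by simp [h1, h2])
    have hjk : jF < kF := hjmem.1
    have hjlt : a jF < b jF := hjmem.2
    have hmid : ∀ i : Fin n, jF < i → i < kF → a i = b i := by
      intro i h1 h2
      have hh1 : ¬ b i < a i := fun h => absurd (hkmin i h) (not_le.mpr h2)
      have hh2 : ¬ a i < b i := fun h => absurd (hjmax i h2 h) (not_le.mpr h1)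
      linarith [le_of_not_gt hh1, le_of_not_gt hh2]
    set δ : ℝ := min (b jF - a jF) (a kF - b kF) with hδdef
    have hδ : 0 < δ := lt_min (by linarith) (by linarith)
    have hδ1 : δ ≤ b jF - a jF := min_le_left _ _
    have hδ2 : δ ≤ a kF - b kF := min_le_right _ _
    have hne_jk : jF ≠ kF := ne_of_lt hjk
    set b' : Fin n → ℝ :=
      fun i => b i + (if i = jF then -δ else 0) + (if i = kF then δ else 0) with hb'def
    have hb'j : b' jF = b jF - δ := by
      simp [hb'def, hne_jk, sub_eq_add_neg]
    have hb'k : b' kF = b kF + δ := by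
      simp [hb'def, Ne.symm hne_jk]
    have hb'o : ∀ i, i ≠ jF → i ≠ kF → b' i = b i := by
      intro i h1 h2
      simp [hb'def, h1, h2]
    have hgap : b kF + δ ≤ b jF - δ := by
      have h1 : a kF ≤ a jF := ha hjk.le
      linarith
    have hb'pos : ∀ i, 0 < b' i := by
      intro i
      by_cases h1 : i = jF
      · rw [h1, hb'j]; linarith [hapos jF]
      · by_cases h2 : i = kF
        · rw [h2, hb'k]; linarith [hbpos kF]
        · rw [hb'o i h1 h2]; exact hbpos i
    have hb'anti : Antitone b' := by
      intro x y hxy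
      rcases eq_or_lt_of_le hxy with rfl | hlt
      · exact le_refl _
      by_cases hxj : x = jF
      · subst hxj
        have hyj : y ≠ jF := by intro h; rw [h] at hlt; exact lt_irrefl _ hlt
        by_cases hyk : y = kF
        · rw [hyk, hb'k, hb'j]; exact hgap
        · rw [hb'o y hyj hyk, hb'j]
          rcases lt_or_ge y kF with hyk2 | hyk2
          · have := hmid y hlt hyk2
            have h2 : a y ≤ a jF := ha hlt.le
            linarith
          · have h2 : b y ≤ b kF := hb hyk2
            linarith
      · by_cases hxk : x = kF
        · subst hxk
          have hyk : y ≠ kF := by intro h; rw [h] at hlt; exact lt_irrefl _ hlt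
          have hyj : y ≠ jF := by
            intro h; rw [h] at hlt; exact absurd (hjk.trans hlt) (lt_irrefl _)
          rw [hb'o y hyj hyk, hb'k]
          have := hb hlt.le
          linarith
        · rw [hb'o x hxj hxk]
          by_cases hyj : y = jF
          · rw [hyj, hb'j]
            have : b y ≤ b x := hb hxy
            rw [hyj] at this
            linarith
          · by_cases hyk : y = kF
            · rw [hyk, hb'k]
              rw [hyk] at hlt
              rcases lt_or_ge x jF with hxj2 | hxj2
              · have h2 : b jF ≤ b x := hb hxj2.le
                linarith
              · rcases eq_or_lt_of_le hxj2 with h | h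
                · exact absurd h.symm hxj
                · have := hmid x h hlt
                  have h2 : a kF ≤ a x := ha hlt.le
                  linarith
            · rw [hb'o y hyj hyk]
              exact hb hxy
    -- prefix sums of b'
    have hps' : ∀ m, pS b' m = pS b m +
        ((if (jF : ℕ) < m then -δ else 0) + (if (kF : ℕ) < m then δ else 0)) := by
      intro m
      unfold pS
      rw [hb'def]
      rw [Finset.sum_add_distrib, Finset.sum_add_distrib]
      rw [Finset.sum_ite_eq' _ jF (fun _ => -δ), Finset.sum_ite_eq' _ kF (fun _ => δ)]
      simp only [mem_filter, mem_univ, true_and]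
      ring
    have hmidsum : ∀ m, (jF : ℕ) < m → m ≤ (kF : ℕ) → pS a m + δ ≤ pS b m := by
      have key : ∀ m, (jF : ℕ) + 1 ≤ m → (m ≤ (kF : ℕ) → pS a m + δ ≤ pS b m) := by
        refine Nat.le_induction ?_ ?_
        · intro _
          rw [pS_succ a _ jF.2, pS_succ b _ jF.2]
          simp only [Fin.eta]
          have := hpre (jF : ℕ)
          linarith
        · intro m hm IH hk1
          have hmn : m < n := by have := kF.2; omega
          rw [pS_succ a m hmn, pS_succ b m hmn]
          have heq : a ⟨m, hmn⟩ = b ⟨m, hmn⟩ := by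
            apply hmid
            · exact hm
            · exact (by omega : m < (kF : ℕ))
          have := IH (by omega)
          linarith
      intro m h1 h2
      exact key m h1 h2
    have hpre' : ∀ m, pS a m ≤ pS b' m := by
      intro m
      rw [hps' m]
      by_cases h1 : (jF : ℕ) < m
      · by_cases h2 : (kF : ℕ) < m
        · simp only [if_pos h1, if_pos h2]
          have := hpre m
          linarith
        · simp only [if_pos h1, if_neg h2]
          have := hmidsum m h1 (by omega)
          linarith
      · have h2 : ¬ (kF : ℕ) < m := by
          have : (jF : ℕ) < (kF : ℕ) := hjk
          omega
        simp only [if_neg h1, if_neg h2]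
        have := hpre m
        linarith
    have hsum' : pS a n = pS b' n := by
      rw [hps' n, if_pos jF.2, if_pos kF.2, hsum]
      ring
    -- the difference set shrinks strictly
    have hsub : (univ.filter (fun i => a i ≠ b' i)) ⊆ (univ.filter (fun i => a i ≠ b i)) := by
      intro i hi
      simp only [mem_filter, mem_univ, true_and] at hi ⊢
      by_cases h1 : i = jF
      · rw [h1]; exact ne_of_lt hjlt
      · by_cases h2 : i = kF
        · rw [h2]; exact (ne_of_lt hkmem).symm
        · rw [← hb'o i h1 h2]; exact hi
    have hssub : (univ.filter (fun i => a i ≠ b' i)) ⊂ (univ.filter (fun i => a i ≠ b i)) := by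
      rw [Finset.ssubset_iff_of_subset hsub]
      rcases le_total (b jF - a jF) (a kF - b kF) with h | h
      · refine ⟨jF, by simp [ne_of_lt hjlt], ?_⟩
        simp only [mem_filter, mem_univ, true_and, not_not]
        rw [hb'j, hδdef, min_eq_left h]
        ring
      · refine ⟨kF, by simp [(ne_of_lt hkmem).symm], ?_⟩
        simp only [mem_filter, mem_univ, true_and, not_not]
        rw [hb'k, hδdef, min_eq_right h]
        ring
    have hcard' : (univ.filter (fun i => a i ≠ b' i)).card ≤ N := by
      have := Finset.card_lt_card hssub
      omega
    have hlt : g b' < g b := transfer b hbpos hb jF kF hjk δ hδ hgap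
    by_cases hab' : a = b'
    · rw [hab']; exact hlt
    · have := ih b' hb'pos hb'anti hpre' hsum' hab' hcard'
      linarith

end Stmt8Aux

theorem stmt8 {n : ℕ} (u v : Fin n → ℝ)
    (hupos : ∀ i, 0 < u i) (hvpos : ∀ i, 0 < v i)
    (hmaj : Maj u v) (hne : dsort u ≠ dsort v) : condNorm u < condNorm v := by
  classical
  have hanti : ∀ w : Fin n → ℝ, Antitone (dsort w) := by
    intro w x y hxy
    have h := Tuple.monotone_sort (fun i => -w i) hxy
    simpa [dsort] using h
  have hsum : ∀ w : Fin n → ℝ, ∑ i, dsort w i = ∑ i, w i := fun w =>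
    Equiv.sum_comp (Tuple.sort (fun i => -w i)) w
  have hdpos : ∀ (w : Fin n → ℝ), (∀ i, 0 < w i) → ∀ i, 0 < dsort w i := by
    intro w hw i; exact hw _
  have key : Stmt8Aux.g (dsort u) < Stmt8Aux.g (dsort v) := by
    apply Stmt8Aux.sorted_main (dsort u) (dsort v) (hdpos u hupos) (hdpos v hvpos)
      (hanti u) (hanti v)
    · intro k; exact hmaj.1 k
    · rw [Stmt8Aux.pS_all, Stmt8Aux.pS_all, hsum u, hsum v]; exact hmaj.2
    · exact hne
  have hg : ∀ w : Fin n → ℝ, (∑ i, condVec w i ^ 2) = Stmt8Aux.g (dsort w) := by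
    intro w
    apply Finset.sum_congr rfl
    intro i _
    rfl
  rw [condNorm, condNorm, hg u, hg v]
  apply Real.sqrt_lt_sqrt _ key
  apply Finset.sum_nonneg
  intro i _
  exact sq_nonneg _
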